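/- Let M be a complete DFA over a finite alphabet Σ with finite state set, let p be a state, and let v, w ∈ Σ* be words such that Loop_M(p) ⊆ {v}* ∪ {w}*. Then there exists a word u ∈ Σ* such that Loop_M(p) ⊆ {u}*. -/
import Mathlib

/-- The `n`-fold concatenation power of a word `u`. -/
def wordPow {α : Type*} (u : List α) : ℕ → List α
  | 0 => []
  | n + 1 => u ++ wordPow u n

theorem wordPow_add {α : Type*} (u : List α) (m n : ℕ) :
    wordPow u (m + n) = wordPow u m ++ wordPow u n := by
  induction m with
  | zero => simp [wordPow]
  | succ m ih => rw [Nat.succ_add]; simp [wordPow, ih]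

theorem wordPow_length {α : Type*} (u : List α) (n : ℕ) :
    (wordPow u n).length = n * u.length := by
  induction n with
  | zero => simp [wordPow]
  | succ n ih => simp [wordPow, ih, Nat.succ_mul, Nat.add_comm]

/-- If the loop language of a state `p` of a complete DFA is
contained in `{v}* ∪ {w}*`, then it is contained in `{u}*` for some word `u`. -/
theorem stmt_6 {α : Type*} [Fintype α] {σ : Type*} [Fintype σ] (M : DFA α σ) (p : σ)
    (v w : List α)
    (h : {x : List α | M.evalFrom p x = p} ⊆
        {x : List α | ∃ k : ℕ, x = wordPow v k} ∪ {x : List α | ∃ k : ℕ, x = wordPow w k}) :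
    ∃ u : List α,
      {x : List α | M.evalFrom p x = p} ⊆ {x : List α | ∃ k : ℕ, x = wordPow u k} := by
  by_cases h1 : {x : List α | M.evalFrom p x = p} ⊆ {x : List α | ∃ k : ℕ, x = wordPow v k}
  · exact ⟨v, h1⟩
  by_cases h2 : {x : List α | M.evalFrom p x = p} ⊆ {x : List α | ∃ k : ℕ, x = wordPow w k}
  · exact ⟨w, h2⟩
  exfalso
  rw [Set.not_subset] at h1 h2
  obtain ⟨x, hxL, hxv⟩ := h1
  obtain ⟨y, hyL, hyw⟩ := h2
  have hx : ∃ a, x = wordPow w a := by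
    rcases h hxL with hc | hc
    · exact absurd hc hxv
    · exact hc
  have hy : ∃ b, y = wordPow v b := by
    rcases h hyL with hc | hc
    · exact hc
    · exact absurd hc hyw
  obtain ⟨a, hxa⟩ := hx
  obtain ⟨b, hyb⟩ := hy
  have hxne : x ≠ [] := by
    intro hx0
    exact hxv ⟨0, by simp [hx0, wordPow]⟩
  have hyne : y ≠ [] := by
    intro hy0
    exact hyw ⟨0, by simp [hy0, wordPow]⟩
  have hxyL : M.evalFrom p (x ++ y) = p := by
    rw [DFA.evalFrom_of_append, hxL, hyL]
  have hxlen : 0 < x.length := List.length_pos_iff.mpr hxne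
  have hylen : 0 < y.length := List.length_pos_iff.mpr hyne
  rcases h hxyL with ⟨c, hc⟩ | ⟨c, hc⟩
  · -- x ++ y = v^c
    have hlen : x.length + y.length = c * v.length := by
      have := congrArg List.length hc
      simpa [wordPow_length] using this
    have hblen : y.length = b * v.length := by rw [hyb, wordPow_length]
    have hbc : b < c := by
      by_contra hbc
      push_neg at hbc
      have : c * v.length ≤ b * v.length := Nat.mul_le_mul_right _ hbc
      omega
    have hsplit : wordPow v c = wordPow v (c - b) ++ wordPow v b := by
      rw [← wordPow_add]; congr 1; omega
    rw [hsplit, ← hyb] at hc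
    have : x = wordPow v (c - b) := by
      have hl : x.length = (wordPow v (c - b)).length := by
        have := congrArg List.length hc
        simp at this; omega
      exact List.append_inj_left hc hl
    exact hxv ⟨c - b, this⟩
  · -- x ++ y = w^c
    have hlen : x.length + y.length = c * w.length := by
      have := congrArg List.length hc
      simpa [wordPow_length] using this
    have halen : x.length = a * w.length := by rw [hxa, wordPow_length]
    have hac : a < c := by
      by_contra hac
      push_neg at hac
      have : c * w.length ≤ a * w.length := Nat.mul_le_mul_right _ hac
      omega
    have hsplit : wordPow w c = wordPow w a ++ wordPow w (c - a) := by
      rw [← wordPow_add]; congr 1; omega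
    rw [hsplit, ← hxa] at hc
    have : y = wordPow w (c - a) :=
      (List.append_right_inj x).mp hc
    exact hyw ⟨c - a, this⟩
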